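/- Let R be a commutative ring, m ≥ 1, and M a free R-module with basis e indexed by Fin 4 × Fin m. In the exterior algebra Λ(M) write aₖ = ι(e(0,k)), āₖ = ι(e(1,k)), cₖ = ι(e(2,k)), c̄ₖ = ι(e(3,k)). Then the ordered product ∏_{k=0}^{m-1} [ (c̄ₖ * aₖ) * ( −(āₖ * c_{(k+1) mod m}) ) ] equals (−1)^{m+1} • ∏_{k=0}^{m-1} ( aₖ * āₖ * cₖ * c̄ₖ ), where both products are taken in increasing order of k. (This is the algebraic identity underlying the computation that a cyclic alternating product of Grassmann bilinears around a loop of length 2m produces the sign (−1)^{m+1}, matching the winding number of an untwisted embedded loop.) -/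

import Mathlib

private lemma swap_head' {A : Type*} [Ring A] (x y z : A) (h : x*y = -(y*x)) :
    x*y*z = -(y*x*z) := by rw [h, neg_mul]

private lemma swap_last' {A : Type*} [Ring A] (w x y : A) (h : x*y = -(y*x)) :
    w*x*y = -(w*y*x) := by rw [mul_assoc, h, mul_neg, ← mul_assoc]

private lemma swap_mid' {A : Type*} [Ring A] (w x y z : A) (h : x*y = -(y*x)) :
    w*x*y*z = -(w*y*x*z) := by
  rw [mul_assoc w x y, h, mul_neg, neg_mul, ← mul_assoc w y x]

private lemma quad_swap {A : Type*} [Ring A] (w x y z : A) (hxy : x*y = -(y*x))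
    (hxz : x*z = -(z*x)) (hwy : w*y = -(y*w)) (hwz : w*z = -(z*w)) : w*x*y*z = y*z*w*x := by
  calc w*x*y*z = -(w*y*x*z) := swap_mid' w x y z hxy
    _ = -(-(w*y*z*x)) := by rw [swap_last' (w*y) x z hxz]
    _ = w*y*z*x := neg_neg _
    _ = -(y*w*z)*x := by rw [swap_head' w y z hwy]
    _ = -(y*w*z*x) := neg_mul _ _
    _ = -(-(y*z*w*x)) := by rw [swap_mid' y w z x hwz]
    _ = y*z*w*x := neg_neg _

private lemma comm_of_ac_ac {A : Type*} [Ring A] (p x y : A) (hx : p*x = -(x*p))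
    (hy : p*y = -(y*p)) : p*(x*y) = (x*y)*p := by
  rw [← mul_assoc, hx, neg_mul, mul_assoc, hy, mul_neg, neg_neg, ← mul_assoc]

private lemma ac_of_comm_ac {A : Type*} [Ring A] (p x y : A) (hx : p*x = x*p)
    (hy : p*y = -(y*p)) : p*(x*y) = -((x*y)*p) := by
  rw [← mul_assoc, hx, mul_assoc, hy, mul_neg, ← mul_assoc]

private lemma prod_map_neg {R : Type*} [CommRing R] {A : Type*} [Ring A] [Algebra R A]
    {ι : Type*} (g : ι → A) (l : List ι) :
    (l.map fun i => -(g i)).prod = ((-1 : R) ^ l.length) • (l.map g).prod := by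
  induction l with
  | nil => simp
  | cons a l ih =>
    rw [List.map_cons, List.map_cons, List.prod_cons, List.prod_cons, ih, neg_mul,
      mul_smul_comm, List.length_cons, pow_succ, mul_neg_one, neg_smul]

private lemma telescope' {A : Type*} [Ring A] (b c : ℕ → A) (j : ℕ) :
    ((List.range (j+1)).map fun k => b k * c (k+1)).prod
      = b 0 * (((List.range j).map fun k => c (k+1) * b (k+1)).prod) * c (j+1) := by
  induction j with
  | zero => simp [List.range_succ]
  | succ j ih =>
    rw [List.range_succ (n := j+1), List.map_append, List.prod_append, ih,
      List.range_succ (n := j), List.map_append, List.prod_append]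
    simp [mul_assoc]

private lemma ofFn_eq_range_map {A : Type*} {n : ℕ} (f : Fin n → A) (g : ℕ → A)
    (h : ∀ k : Fin n, g k.val = f k) : List.ofFn f = (List.range n).map g := by
  rw [List.ofFn_eq_map, ← (show (List.finRange n).map Fin.val = List.range n from
    List.ext_getElem (by simp) (by simp)), List.map_map]
  exact List.map_congr_left fun k _ => (h k).symm

/-- **Cyclic Grassmann loop sign identity.**
For a free `R`-module `M` with basis `e` indexed by `Fin 4 × Fin m` (`m ≥ 1`), writing
`a k = ι (e (0,k))`, `ā k = ι (e (1,k))`, `c k = ι (e (2,k))`, `c̄ k = ι (e (3,k))` in the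
exterior algebra, the ordered product
`∏ k, (c̄ k * a k) * (-(ā k * c ((k+1) mod m)))` equals
`(-1)^(m+1) • ∏ k, (a k * ā k * c k * c̄ k)`. -/
theorem exteriorAlgebra_cyclic_loop_sign {R : Type*} [CommRing R] {M : Type*} [AddCommGroup M]
    [Module R M] {m : ℕ} (hm : 1 ≤ m) (e : Module.Basis (Fin 4 × Fin m) R M) :
    (List.ofFn fun k : Fin m =>
        (ExteriorAlgebra.ι R (e ((3 : Fin 4), k)) * ExteriorAlgebra.ι R (e ((0 : Fin 4), k))) *
          (-(ExteriorAlgebra.ι R (e ((1 : Fin 4), k)) *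
              ExteriorAlgebra.ι R
                (e ((2 : Fin 4), (⟨(k.val + 1) % m, Nat.mod_lt _ (by omega)⟩ : Fin m)))))).prod
      = ((-1 : R) ^ (m + 1)) •
        (List.ofFn fun k : Fin m =>
          ExteriorAlgebra.ι R (e ((0 : Fin 4), k)) * ExteriorAlgebra.ι R (e ((1 : Fin 4), k)) *
            ExteriorAlgebra.ι R (e ((2 : Fin 4), k)) *
            ExteriorAlgebra.ι R (e ((3 : Fin 4), k))).prod := by
  have hm0 : 0 < m := hm
  set fm : ℕ → Fin m := fun n => ⟨n % m, Nat.mod_lt _ hm0⟩ with hfm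
  set a : ℕ → ExteriorAlgebra R M := fun n => ExteriorAlgebra.ι R (e (0, fm n)) with ha
  set ab : ℕ → ExteriorAlgebra R M := fun n => ExteriorAlgebra.ι R (e (1, fm n)) with hab
  set c : ℕ → ExteriorAlgebra R M := fun n => ExteriorAlgebra.ι R (e (2, fm n)) with hc
  set cb : ℕ → ExteriorAlgebra R M := fun n => ExteriorAlgebra.ι R (e (3, fm n)) with hcb
  have hfmv : ∀ k : Fin m, fm k.val = k := fun k => Fin.ext (Nat.mod_eq_of_lt k.isLt)
  have hAC : ∀ x y : M, ExteriorAlgebra.ι R x * ExteriorAlgebra.ι R y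
      = -(ExteriorAlgebra.ι R y * ExteriorAlgebra.ι R x) :=
    fun x y => eq_neg_of_add_eq_zero_left (ExteriorAlgebra.ι_add_mul_swap x y)
  have hGL : ∀ k : Fin m, (cb k.val * a k.val) * (-(ab k.val * c (k.val+1)))
      = (ExteriorAlgebra.ι R (e ((3 : Fin 4), k)) * ExteriorAlgebra.ι R (e ((0 : Fin 4), k))) *
          (-(ExteriorAlgebra.ι R (e ((1 : Fin 4), k)) *
              ExteriorAlgebra.ι R
                (e ((2 : Fin 4), (⟨(k.val + 1) % m, Nat.mod_lt _ (by omega)⟩ : Fin m))))) := by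
    intro k
    simp only [ha, hab, hc, hcb, hfmv]
    rfl
  have hGR : ∀ k : Fin m, a k.val * ab k.val * c k.val * cb k.val
      = ExteriorAlgebra.ι R (e ((0 : Fin 4), k)) * ExteriorAlgebra.ι R (e ((1 : Fin 4), k)) *
          ExteriorAlgebra.ι R (e ((2 : Fin 4), k)) * ExteriorAlgebra.ι R (e ((3 : Fin 4), k)) := by
    intro k
    simp only [ha, hab, hc, hcb, hfmv]
  rw [ofFn_eq_range_map _ (fun n => (cb n * a n) * (-(ab n * c (n+1)))) hGL,
    ofFn_eq_range_map _ (fun n => a n * ab n * c n * cb n) hGR]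
  set b : ℕ → ExteriorAlgebra R M := fun n => (cb n * a n) * ab n with hb
  have hF : (fun n => (cb n * a n) * (-(ab n * c (n+1)))) = fun n => -(b n * c (n+1)) := by
    funext n
    rw [mul_neg, hb, ← mul_assoc]
  rw [hF, prod_map_neg (R := R), List.length_range]
  obtain ⟨j, rfl⟩ : ∃ j, m = j + 1 := ⟨m - 1, by omega⟩
  rw [telescope' b c j]
  have hc0 : c (j+1) = c 0 := by
    simp only [hc]
    congr 1
    exact congrArg _ (congrArg _ (Fin.ext (by simp [hfm])))
  rw [hc0]
  -- c 0 commutes with each block c (k+1) * b (k+1)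
  have hblock : ∀ x ∈ (List.range j).map (fun k => c (k+1) * b (k+1)),
      Commute (c 0) x := by
    intro x hx
    simp only [List.mem_map] at hx
    obtain ⟨k, -, rfl⟩ := hx
    have h1 : c 0 * (cb (k+1) * a (k+1)) = (cb (k+1) * a (k+1)) * c 0 :=
      comm_of_ac_ac _ _ _ (hAC _ _) (hAC _ _)
    have h2 : c 0 * b (k+1) = -(b (k+1) * c 0) := by
      rw [hb]
      exact ac_of_comm_ac _ _ _ h1 (hAC _ _)
    exact comm_of_ac_ac _ _ _ (hAC _ _) h2
  have hcQ : c 0 * ((List.range j).map fun k => c (k+1) * b (k+1)).prod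
      = ((List.range j).map fun k => c (k+1) * b (k+1)).prod * c 0 :=
    Commute.list_prod_right _ _ hblock
  have hb0c0 : b 0 * c 0 = -(c 0 * b 0) := by
    have h1 : c 0 * (cb 0 * a 0) = (cb 0 * a 0) * c 0 :=
      comm_of_ac_ac _ _ _ (hAC _ _) (hAC _ _)
    have h2 : c 0 * b 0 = -(b 0 * c 0) := by
      rw [hb]; exact ac_of_comm_ac _ _ _ h1 (hAC _ _)
    rw [h2, neg_neg]
  have step : b 0 * ((List.range j).map fun k => c (k+1) * b (k+1)).prod * c 0
      = -(((List.range (j+1)).map fun k => c k * b k).prod) := by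
    rw [mul_assoc, ← hcQ, ← mul_assoc, hb0c0, neg_mul]
    congr 1
    rw [List.range_succ_eq_map, List.map_cons, List.prod_cons, List.map_map]
    rfl
  rw [step]
  have hfac : (fun k : ℕ => c k * b k) = fun k => a k * ab k * c k * cb k := by
    funext k
    calc c k * b k = c k * (cb k * a k) * ab k := by rw [hb, mul_assoc]
      _ = c k * cb k * a k * ab k := by rw [← mul_assoc (c k) (cb k) (a k)]
      _ = a k * ab k * c k * cb k :=
        quad_swap _ _ _ _ (hAC _ _) (hAC _ _) (hAC _ _) (hAC _ _)
  rw [hfac, smul_neg, ← neg_smul, pow_succ ((-1 : R)) (j+1), mul_neg_one]
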